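/- Growth bounds for the approximating drivers: For every integer m ≥ 1, every z ∈ ℝ, and every bounded Borel function u : ℝ → ℝ with ∫ u² dν < ∞, one has −C_{κ,η} z − C_{κ,η}²/(2λ) − (π̲ + π̄) ∫_ℝ |η(e)| ν(de) ≤ f_m(z,u) ≤ (λ/2) z² + |u|_λ, where |u|_λ = ∫_ℝ h_λ(u(e)) ν(de). -/

import Mathlib

open MeasureTheory Set
open scoped ENNReal

noncomputable section

/-- The exponential penalty function `h_λ(x) = (e^{λx} − λx − 1)/λ`. -/
def hpen (lam x : ℝ) : ℝ := (Real.exp (lam * x) - lam * x - 1) / lam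

/-- `φ(x) = arctan x` for `x > 0`, `φ(x) = x` for `x ≤ 0`. -/
def phi0 (x : ℝ) : ℝ := if 0 < x then Real.arctan x else x

/-- The truncation from above `φ_m(x) = φ(x − m) + m`. -/
def phim (m : ℕ) (x : ℝ) : ℝ := phi0 (x - m) + m

/-- The plateau truncation `ρ_m`. -/
def rhom (m : ℕ) (x : ℝ) : ℝ :=
  if -((m : ℝ) + 1) < x ∧ x < -(m : ℝ) then x + m + 1
  else if -(m : ℝ) ≤ x ∧ x ≤ (m : ℝ) then 1
  else if (m : ℝ) < x ∧ x ≤ (m : ℝ) + 1 then (m : ℝ) + 1 - x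
  else 0

/-- `ν_m`: the restriction of `ν` to `ℝ \ [−1/m, 1/m]`. -/
def numeas (ν : Measure ℝ) (m : ℕ) : Measure ℝ :=
  ν.restrict (Set.Icc (-(1 / (m : ℝ))) (1 / (m : ℝ)))ᶜ

/-- The truncated no-signal part `f¹_m(z,u,p)` of the driver. -/
def f1m (ν : Measure ℝ) (η γ : ℝ → ℝ) (lam Cke : ℝ) (m : ℕ)
    (z : ℝ) (u : ℝ → ℝ) (p : ℝ) : ℝ :=
  lam / 2 * (p - (z + Cke / lam)) ^ 2 * rhom m z
    + (∫ e in {e | γ e = 0}, hpen lam (phim m (u e - p * η e)) ∂(numeas ν m))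
    - p * ∫ e in {e | γ e = 0}, η e ∂ν

/-- The truncated signal part `f²_m(g,u,p)` of the driver. -/
def f2m (η γ : ℝ → ℝ) (K : ℝ → Measure ℝ) (lam : ℝ) (m : ℕ)
    (g : ℝ) (u : ℝ → ℝ) (p : ℝ) : ℝ :=
  (∫ e in {e | γ e = g},
      (if 1 / (m : ℝ) < |e| then hpen lam (phim m (u e - p * η e)) else 0) ∂(K g))
    - p * ∫ e in {e | γ e = g}, η e ∂(K g)

/-- The truncated driver `f_m(z,u)`. -/
def fm (ν μ : Measure ℝ) (η γ : ℝ → ℝ) (K : ℝ → Measure ℝ)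
    (lam Cke pil pib : ℝ) (m : ℕ) (z : ℝ) (u : ℝ → ℝ) : ℝ :=
  (⨅ p : Set.Icc (-pil) pib, f1m ν η γ lam Cke m z u p)
    + (∫ g in ({0}ᶜ : Set ℝ), (⨅ p : Set.Icc (-pil) pib, f2m η γ K lam m g u p) ∂μ)
    - Cke * z - Cke ^ 2 / (2 * lam)

lemma hpen_nonneg {lam : ℝ} (hlam : 0 < lam) (x : ℝ) : 0 ≤ hpen lam x := by
  have := Real.add_one_le_exp (lam * x)
  unfold hpen
  apply div_nonneg _ hlam.le
  linarith

lemma hpen_mono {lam : ℝ} (hlam : 0 < lam) {a b : ℝ} (ha : 0 ≤ a) (hab : a ≤ b) :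
    hpen lam a ≤ hpen lam b := by
  unfold hpen
  gcongr ?_ / lam
  have h1 : (1:ℝ) ≤ Real.exp (lam * a) := Real.one_le_exp (by positivity)
  have h2 : lam * (b - a) + 1 ≤ Real.exp (lam * (b - a)) := Real.add_one_le_exp _
  have h3 : Real.exp (lam * b) = Real.exp (lam * a) * Real.exp (lam * (b - a)) := by
    rw [← Real.exp_add]; ring_nf
  nlinarith [Real.exp_pos (lam * (b - a)), mul_nonneg hlam.le (sub_nonneg.2 hab)]

lemma arctan_le_self {t : ℝ} (ht : 0 ≤ t) : Real.arctan t ≤ t := by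
  have h0 : 0 ≤ Real.arctan t := by
    rw [← Real.arctan_zero]
    exact (Real.arctan_strictMono.monotone ht)
  have := Real.le_tan h0 (Real.arctan_lt_pi_div_two t)
  rwa [Real.tan_arctan] at this

lemma hpen_phim_le {lam : ℝ} (hlam : 0 < lam) (m : ℕ) (x : ℝ) :
    hpen lam (phim m x) ≤ hpen lam x := by
  unfold phim phi0
  split_ifs with h
  · have h1 : 0 ≤ Real.arctan (x - m) := by
      rw [← Real.arctan_zero]; exact Real.arctan_strictMono.monotone (by linarith)
    have h2 : Real.arctan (x - m) ≤ x - m := arctan_le_self (by linarith)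
    exact hpen_mono hlam (by positivity) (by linarith)
  · have : x - (m:ℝ) + m = x := by ring
    rw [this]

lemma exp_sub_le_sq (t : ℝ) : Real.exp t - t - 1 ≤ t ^ 2 * Real.exp |t| := by
  rcases le_or_gt t 0 with ht | ht
  · -- e^t ≤ 1 + t + t², and t² ≤ t² e^{|t|}
    have h1 : Real.exp t ≤ 1 + t + t ^ 2 := by
      have hs : (0:ℝ) ≤ -t := by linarith
      have h2 : (-t) + 1 ≤ Real.exp (-t) := Real.add_one_le_exp _
      have h3 : Real.exp t * Real.exp (-t) = 1 := by
        rw [← Real.exp_add]; simp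
      nlinarith [Real.exp_pos t, Real.exp_pos (-t)]
    nlinarith [Real.one_le_exp (abs_nonneg t), sq_nonneg t]
  · have habs : |t| = t := abs_of_pos ht
    rw [habs]
    rcases le_or_gt 1 t with h1 | h1
    · nlinarith [Real.add_one_le_exp t, Real.exp_pos t, sq_nonneg (t - 1)]
    · -- 0 < t < 1 : e^t ≤ 1/(1-t) = (1+t)/(1-t²) so e^t (1-t²) ≤ 1+t
      have h2 : (1 - t) * Real.exp t ≤ 1 := by
        have := Real.add_one_le_exp (-t)
        have h3 : Real.exp t * Real.exp (-t) = 1 := by rw [← Real.exp_add]; simp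
        nlinarith [Real.exp_pos t]
      nlinarith [Real.exp_pos t]

lemma hpen_le_sq {lam M : ℝ} (hlam : 0 < lam) {x : ℝ} (hx : |x| ≤ M) :
    hpen lam x ≤ (lam * Real.exp (lam * M)) * x ^ 2 := by
  unfold hpen
  rw [div_le_iff₀ hlam]
  have h1 : Real.exp (lam * x) - lam * x - 1 ≤ (lam * x) ^ 2 * Real.exp |lam * x| :=
    exp_sub_le_sq (lam * x)
  have h2 : Real.exp |lam * x| ≤ Real.exp (lam * M) := by
    apply Real.exp_le_exp.2
    rw [abs_mul, abs_of_pos hlam]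
    exact mul_le_mul_of_nonneg_left hx hlam.le
  nlinarith [sq_nonneg (lam * x), Real.exp_pos |lam * x|]

lemma rhom_nonneg (m : ℕ) (x : ℝ) : 0 ≤ rhom m x := by
  unfold rhom; split_ifs <;> push_cast <;> first | linarith | norm_num

lemma rhom_le_one (m : ℕ) (x : ℝ) : rhom m x ≤ 1 := by
  unfold rhom; split_ifs <;> first | linarith | norm_num

lemma phi0_measurable : Measurable phi0 := by
  unfold phi0
  exact Measurable.ite (measurableSet_lt measurable_const measurable_id)
    Real.continuous_arctan.measurable measurable_id

lemma phim_measurable (m : ℕ) : Measurable (phim m) :=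
  (phi0_measurable.comp (measurable_id.sub measurable_const)).add measurable_const

lemma hpen_continuous (lam : ℝ) : Continuous (hpen lam) := by
  unfold hpen; fun_prop

set_option maxHeartbeats 2000000 in
/-- **Growth bounds for the approximating drivers**: for every `m ≥ 1`, `z ∈ ℝ` and bounded
Borel `u` with `∫ u² dν < ∞`,
`−C_{κ,η} z − C_{κ,η}²/(2λ) − (π̲ + π̄) ∫ |η| dν ≤ f_m(z,u) ≤ (λ/2) z² + |u|_λ`,
where `|u|_λ = ∫ h_λ(u(e)) ν(de)`. -/
theorem fm_growth_bounds
    (ν : Measure ℝ) [SigmaFinite ν]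
    (hν0 : ν {0} = 0)
    (hν2 : (∫⁻ e, ENNReal.ofReal (min 1 (e ^ 2)) ∂ν) < ⊤)
    (η γ : ℝ → ℝ) (hηmeas : Measurable η) (hγmeas : Measurable γ)
    (C₀ : ℝ) (hC₀ : 0 < C₀)
    (hηb : ∀ e, |η e| ≤ C₀ * min 1 |e|)
    (hγb : ∀ e, |γ e| ≤ C₀ * min 1 |e|)
    (hηint : Integrable η ν)
    (μ : Measure ℝ)
    (hμ : ∀ B : Set ℝ, MeasurableSet B → μ B = ν (γ ⁻¹' (B \ {0})))
    (K : ℝ → Measure ℝ) (hKmeas : Measurable K)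
    (hKprob : ∀ᵐ g ∂μ.restrict ({0}ᶜ : Set ℝ),
      K g Set.univ = 1 ∧ K g {e | γ e = g} = 1)
    (hdis : ∀ B : Set ℝ, MeasurableSet B →
      ν (B ∩ {e | γ e ≠ 0}) = ∫⁻ g in ({0}ᶜ : Set ℝ), K g B ∂μ)
    (lam pil pib : ℝ) (hlam : 0 < lam) (hpil : 0 < pil) (hpib : 0 < pib)
    (Cke : ℝ)
    (m : ℕ) (hm : 1 ≤ m)
    (z : ℝ) (u : ℝ → ℝ) (humeas : Measurable u)
    (hub : ∃ M : ℝ, ∀ e, |u e| ≤ M)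
    (hu2 : Integrable (fun e => (u e) ^ 2) ν) :
    -Cke * z - Cke ^ 2 / (2 * lam) - (pil + pib) * (∫ e, |η e| ∂ν)
        ≤ fm ν μ η γ K lam Cke pil pib m z u ∧
      fm ν μ η γ K lam Cke pil pib m z u ≤ lam / 2 * z ^ 2 + ∫ e, hpen lam (u e) ∂ν := by
  obtain ⟨M, hM⟩ := hub
  have h0J : (0:ℝ) ∈ Set.Icc (-pil) pib := ⟨by linarith, hpib.le⟩
  haveI hJne : Nonempty (Set.Icc (-pil) pib) := ⟨⟨0, h0J⟩⟩
  have hP : 0 < pil + pib := by linarith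
  have habsp : ∀ p : Set.Icc (-pil) pib, |(p:ℝ)| ≤ pil + pib := by
    rintro ⟨p, hp⟩
    obtain ⟨hp1, hp2⟩ := hp
    rw [abs_le]
    constructor <;> linarith
  -- measurable sets
  have hS0 : MeasurableSet {e : ℝ | γ e = 0} := hγmeas (measurableSet_singleton 0)
  have hSne : MeasurableSet {e : ℝ | γ e ≠ 0} := hS0.compl
  have hScompl : {e : ℝ | γ e ≠ 0} = {e : ℝ | γ e = 0}ᶜ := rfl
  -- integrability of hpen ∘ u
  have hpen_meas : Measurable fun e => hpen lam (u e) :=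
    (hpen_continuous lam).measurable.comp humeas
  have hhu_int : Integrable (fun e => hpen lam (u e)) ν := by
    refine Integrable.mono (hu2.const_mul (lam * Real.exp (lam * M)))
      hpen_meas.aestronglyMeasurable ?_
    filter_upwards with e
    rw [Real.norm_eq_abs, abs_of_nonneg (hpen_nonneg hlam _), Real.norm_eq_abs]
    refine (hpen_le_sq hlam (hM e)).trans ?_
    rw [abs_mul]
    have h1 : (0:ℝ) ≤ lam * Real.exp (lam * M) := by positivity
    nlinarith [abs_nonneg ((u e)^2), le_abs_self ((u e)^2), sq_nonneg (u e),
      le_abs_self (lam * Real.exp (lam * M))]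
  -- the W function
  set W : ℝ → ℝ := fun e => if 1 / (m : ℝ) < |e| then hpen lam (phim m (u e)) else 0 with hWdef
  have hWmeas : Measurable W := by
    apply Measurable.ite (measurableSet_lt measurable_const measurable_abs)
    · exact (hpen_continuous lam).measurable.comp ((phim_measurable m).comp humeas)
    · exact measurable_const
  have hWnonneg : ∀ e, 0 ≤ W e := by
    intro e; simp only [hWdef]
    split_ifs
    · exact hpen_nonneg hlam _
    · exact le_rfl
  have hWle : ∀ e, W e ≤ hpen lam (u e) := by
    intro e; simp only [hWdef]
    split_ifs
    · exact hpen_phim_le hlam m _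
    · exact hpen_nonneg hlam _
  -- bind measure identity
  have hbind : (μ.restrict ({0}ᶜ : Set ℝ)).bind K = ν.restrict {e | γ e ≠ 0} := by
    ext s hs
    rw [Measure.bind_apply hs hKmeas.aemeasurable, Measure.restrict_apply hs, ← hdis s hs]
  have hkey : ∀ f : ℝ → ℝ≥0∞, Measurable f →
      (∫⁻ g in ({0}ᶜ : Set ℝ), (∫⁻ e, f e ∂(K g)) ∂μ)
        = ∫⁻ e in {e | γ e ≠ 0}, f e ∂ν := by
    intro f hf
    rw [← Measure.lintegral_bind hKmeas.aemeasurable hf.aemeasurable, hbind]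
  -- F and G
  set F : ℝ → ℝ≥0∞ := fun g => ∫⁻ e, ENNReal.ofReal |η e| ∂(K g) with hFdef
  have hFmeas : Measurable F :=
    (Measure.measurable_lintegral (hηmeas.abs.ennreal_ofReal)).comp hKmeas
  have hηabs_fin : (∫⁻ e, ENNReal.ofReal |η e| ∂ν) ≠ ⊤ := by
    have h := (hasFiniteIntegral_iff_ofReal
      (Filter.Eventually.of_forall fun e => abs_nonneg (η e))).1 hηint.abs.2
    exact h.ne
  have hhu_fin : (∫⁻ e, ENNReal.ofReal (hpen lam (u e)) ∂ν) ≠ ⊤ := by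
    have h := (hasFiniteIntegral_iff_ofReal
      (Filter.Eventually.of_forall fun e => hpen_nonneg hlam (u e))).1 hhu_int.2
    exact h.ne
  have hFfin : (∫⁻ g in ({0}ᶜ : Set ℝ), F g ∂μ) ≠ ⊤ := by
    simp only [hFdef]
    rw [hkey _ (hηmeas.abs.ennreal_ofReal)]
    exact ne_top_of_le_ne_top hηabs_fin (lintegral_mono' Measure.restrict_le_self le_rfl)
  set G : ℝ → ℝ≥0∞ := fun g => ∫⁻ e, ENNReal.ofReal (W e) ∂(K g) with hGdef
  have hGmeas : Measurable G :=
    (Measure.measurable_lintegral (hWmeas.ennreal_ofReal)).comp hKmeas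
  have hGlint_le : (∫⁻ g in ({0}ᶜ : Set ℝ), G g ∂μ)
      ≤ ∫⁻ e in {e | γ e ≠ 0}, ENNReal.ofReal (hpen lam (u e)) ∂ν := by
    simp only [hGdef]
    rw [hkey _ hWmeas.ennreal_ofReal]
    exact lintegral_mono fun e => ENNReal.ofReal_le_ofReal (hWle e)
  have hGfin : (∫⁻ g in ({0}ᶜ : Set ℝ), G g ∂μ) ≠ ⊤ :=
    ne_top_of_le_ne_top
      (ne_top_of_le_ne_top hhu_fin (lintegral_mono' Measure.restrict_le_self le_rfl)) hGlint_le
  -- real integral abbreviations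
  have hE0nonneg : 0 ≤ ∫ e in {e | γ e = 0}, |η e| ∂ν :=
    setIntegral_nonneg hS0 fun e _ => abs_nonneg _
  have hE1nonneg : 0 ≤ ∫ e in {e | γ e ≠ 0}, |η e| ∂ν :=
    setIntegral_nonneg hSne fun e _ => abs_nonneg _
  have hsplitE : (∫ e in {e | γ e = 0}, |η e| ∂ν) + (∫ e in {e | γ e ≠ 0}, |η e| ∂ν)
      = ∫ e, |η e| ∂ν := by
    rw [hScompl]
    exact integral_add_compl hS0 hηint.abs
  have hH1nonneg : 0 ≤ ∫ e in {e | γ e ≠ 0}, hpen lam (u e) ∂ν :=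
    setIntegral_nonneg hSne fun e _ => hpen_nonneg hlam _
  have hsplitH : (∫ e in {e | γ e = 0}, hpen lam (u e) ∂ν)
      + (∫ e in {e | γ e ≠ 0}, hpen lam (u e) ∂ν) = ∫ e, hpen lam (u e) ∂ν := by
    rw [hScompl]
    exact integral_add_compl hS0 hhu_int
  -- a.e. pointwise bounds on f2m
  have hAEb : ∀ᵐ g ∂μ.restrict ({0}ᶜ : Set ℝ),
      (∀ p : Set.Icc (-pil) pib,
          -((pil + pib) * (F g).toReal) ≤ f2m η γ K lam m g u p)
      ∧ f2m η γ K lam m g u 0 = (G g).toReal := by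
    filter_upwards [hKprob] with g hg
    have hsetg : MeasurableSet {e : ℝ | γ e = g} := hγmeas (measurableSet_singleton g)
    have hcompl : K g ({e : ℝ | γ e = g}ᶜ) = 0 := by
      have h := measure_compl hsetg (by rw [hg.2]; exact ENNReal.one_ne_top)
      rw [hg.2, hg.1] at h
      simpa using h
    have hres : (K g).restrict {e : ℝ | γ e = g} = K g :=
      Measure.restrict_eq_self_of_ae_mem (mem_ae_iff.2 hcompl)
    have hFtoReal : ∫ e, |η e| ∂(K g) = (F g).toReal := by
      simp only [hFdef]
      exact integral_eq_lintegral_of_nonneg_ae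
        (Filter.Eventually.of_forall fun e => abs_nonneg _)
        hηmeas.abs.aestronglyMeasurable
    have hη_abs : |∫ e in {e : ℝ | γ e = g}, η e ∂(K g)| ≤ (F g).toReal := by
      rw [show (∫ e in {e : ℝ | γ e = g}, η e ∂(K g)) = ∫ e, η e ∂(K g) from by
          conv_lhs => rw [hres],
        ← hFtoReal]
      simpa [Real.norm_eq_abs] using norm_integral_le_integral_norm (μ := K g) η
    constructor
    · intro p
      unfold f2m
      have hA : 0 ≤ ∫ e in {e : ℝ | γ e = g},
          (if 1 / (m : ℝ) < |e| then hpen lam (phim m (u e - (p : ℝ) * η e)) else 0) ∂(K g) := by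
        apply setIntegral_nonneg hsetg
        intro e _
        split_ifs
        · exact hpen_nonneg hlam _
        · exact le_rfl
      have hB : |(p : ℝ) * ∫ e in {e : ℝ | γ e = g}, η e ∂(K g)|
          ≤ (pil + pib) * (F g).toReal := by
        rw [abs_mul]
        exact mul_le_mul (habsp p) hη_abs (abs_nonneg _) hP.le
      have hB2 := le_abs_self ((p : ℝ) * ∫ e in {e : ℝ | γ e = g}, η e ∂(K g))
      linarith
    · unfold f2m
      simp only [zero_mul, sub_zero]
      rw [show ((K g).restrict {e : ℝ | γ e = g}) = K g from hres]
      simp only [hGdef, hWdef]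
      exact integral_eq_lintegral_of_nonneg_ae
        (Filter.Eventually.of_forall fun e => by
          dsimp only
          split_ifs
          · exact hpen_nonneg hlam _
          · exact le_rfl)
        (by
          apply Measurable.aestronglyMeasurable
          apply Measurable.ite (measurableSet_lt measurable_const measurable_abs)
          · exact (hpen_continuous lam).measurable.comp ((phim_measurable m).comp humeas)
          · exact measurable_const)
  have hΦlb : ∀ᵐ g ∂μ.restrict ({0}ᶜ : Set ℝ),
      -((pil + pib) * (F g).toReal)
        ≤ ⨅ p : Set.Icc (-pil) pib, f2m η γ K lam m g u p := by
    filter_upwards [hAEb] with g hg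
    exact le_ciInf hg.1
  have hΦub : ∀ᵐ g ∂μ.restrict ({0}ᶜ : Set ℝ),
      (⨅ p : Set.Icc (-pil) pib, f2m η γ K lam m g u p) ≤ (G g).toReal := by
    filter_upwards [hAEb] with g hg
    have hb : BddBelow (Set.range fun p : Set.Icc (-pil) pib => f2m η γ K lam m g u p) := by
      refine ⟨-((pil + pib) * (F g).toReal), ?_⟩
      rintro x ⟨p, rfl⟩
      exact hg.1 p
    have h2 := ciInf_le hb (⟨0, h0J⟩ : Set.Icc (-pil) pib)
    exact h2.trans (le_of_eq hg.2)
  -- integrability of the comparison functions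
  have hFint : Integrable (fun g => (F g).toReal) (μ.restrict ({0}ᶜ : Set ℝ)) :=
    integrable_toReal_of_lintegral_ne_top hFmeas.aemeasurable hFfin
  have hGint : Integrable (fun g => (G g).toReal) (μ.restrict ({0}ᶜ : Set ℝ)) :=
    integrable_toReal_of_lintegral_ne_top hGmeas.aemeasurable hGfin
  have hFintegral : ∫ g in ({0}ᶜ : Set ℝ), (F g).toReal ∂μ
      = ∫ e in {e | γ e ≠ 0}, |η e| ∂ν := by
    rw [integral_toReal hFmeas.aemeasurable (ae_lt_top hFmeas hFfin)]
    simp only [hFdef]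
    rw [hkey _ hηmeas.abs.ennreal_ofReal]
    exact (integral_eq_lintegral_of_nonneg_ae
      (Filter.Eventually.of_forall fun e => abs_nonneg _)
      hηmeas.abs.aestronglyMeasurable).symm
  have hGintegral : ∫ g in ({0}ᶜ : Set ℝ), (G g).toReal ∂μ
      ≤ ∫ e in {e | γ e ≠ 0}, hpen lam (u e) ∂ν := by
    rw [integral_toReal hGmeas.aemeasurable (ae_lt_top hGmeas hGfin)]
    have h2 : (∫⁻ e in {e | γ e ≠ 0}, ENNReal.ofReal (hpen lam (u e)) ∂ν) ≠ ⊤ :=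
      ne_top_of_le_ne_top hhu_fin (lintegral_mono' Measure.restrict_le_self le_rfl)
    refine le_trans (ENNReal.toReal_mono h2 hGlint_le) ?_
    rw [← integral_eq_lintegral_of_nonneg_ae
      (Filter.Eventually.of_forall fun e => hpen_nonneg hlam _)
      hpen_meas.aestronglyMeasurable]
  -- bounds on the μ-integral of the infimum
  have hIlb : -((pil + pib) * ∫ e in {e | γ e ≠ 0}, |η e| ∂ν)
      ≤ ∫ g in ({0}ᶜ : Set ℝ),
          (⨅ p : Set.Icc (-pil) pib, f2m η γ K lam m g u p) ∂μ := by
    by_cases hΦint : Integrable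
        (fun g => ⨅ p : Set.Icc (-pil) pib, f2m η γ K lam m g u p)
        (μ.restrict ({0}ᶜ : Set ℝ))
    · have h1 := integral_mono_ae ((hFint.const_mul (pil + pib)).neg) hΦint hΦlb
      simp only [Pi.neg_apply] at h1
      rw [integral_neg, integral_const_mul, hFintegral] at h1
      exact h1
    · rw [integral_undef hΦint]
      have : 0 ≤ (pil + pib) * ∫ e in {e | γ e ≠ 0}, |η e| ∂ν :=
        mul_nonneg hP.le hE1nonneg
      linarith
  have hIub : (∫ g in ({0}ᶜ : Set ℝ),
        (⨅ p : Set.Icc (-pil) pib, f2m η γ K lam m g u p) ∂μ)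
      ≤ ∫ e in {e | γ e ≠ 0}, hpen lam (u e) ∂ν := by
    by_cases hΦint : Integrable
        (fun g => ⨅ p : Set.Icc (-pil) pib, f2m η γ K lam m g u p)
        (μ.restrict ({0}ᶜ : Set ℝ))
    · exact le_trans (integral_mono_ae hΦint hGint hΦub) hGintegral
    · rw [integral_undef hΦint]
      exact hH1nonneg
  -- bounds on the infimum of f1m
  have hf1lb : ∀ p : Set.Icc (-pil) pib,
      -((pil + pib) * ∫ e in {e | γ e = 0}, |η e| ∂ν) ≤ f1m ν η γ lam Cke m z u p := by
    intro p
    unfold f1m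
    have h1 : 0 ≤ lam / 2 * ((p : ℝ) - (z + Cke / lam)) ^ 2 * rhom m z :=
      mul_nonneg (by positivity) (rhom_nonneg m z)
    have h2 : 0 ≤ ∫ e in {e | γ e = 0},
        hpen lam (phim m (u e - (p : ℝ) * η e)) ∂(numeas ν m) :=
      setIntegral_nonneg hS0 fun e _ => hpen_nonneg hlam _
    have h3 : |∫ e in {e | γ e = 0}, η e ∂ν| ≤ ∫ e in {e | γ e = 0}, |η e| ∂ν := by
      simpa [Real.norm_eq_abs] using
        norm_integral_le_integral_norm (μ := ν.restrict {e | γ e = 0}) η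
    have h4 : |(p : ℝ) * ∫ e in {e | γ e = 0}, η e ∂ν|
        ≤ (pil + pib) * ∫ e in {e | γ e = 0}, |η e| ∂ν := by
      rw [abs_mul]
      exact mul_le_mul (habsp p) h3 (abs_nonneg _) hP.le
    have h5 := le_abs_self ((p : ℝ) * ∫ e in {e | γ e = 0}, η e ∂ν)
    linarith
  have hbdd1 : BddBelow (Set.range fun p : Set.Icc (-pil) pib =>
      f1m ν η γ lam Cke m z u p) := by
    refine ⟨-((pil + pib) * ∫ e in {e | γ e = 0}, |η e| ∂ν), ?_⟩
    rintro x ⟨p, rfl⟩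
    exact hf1lb p
  have hinf1lb : -((pil + pib) * ∫ e in {e | γ e = 0}, |η e| ∂ν)
      ≤ ⨅ p : Set.Icc (-pil) pib, f1m ν η γ lam Cke m z u p := le_ciInf hf1lb
  have hinf1ub : (⨅ p : Set.Icc (-pil) pib, f1m ν η γ lam Cke m z u p)
      ≤ f1m ν η γ lam Cke m z u 0 := ciInf_le hbdd1 ⟨0, h0J⟩
  have hf10 : f1m ν η γ lam Cke m z u 0
      ≤ lam / 2 * z ^ 2 + Cke * z + Cke ^ 2 / (2 * lam)
        + ∫ e in {e | γ e = 0}, hpen lam (u e) ∂ν := by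
    unfold f1m
    have hA : (∫ e in {e | γ e = 0},
        hpen lam (phim m (u e - 0 * η e)) ∂(numeas ν m))
        ≤ ∫ e in {e | γ e = 0}, hpen lam (u e) ∂ν := by
      simp only [zero_mul, sub_zero]
      unfold numeas
      rw [Measure.restrict_restrict hS0]
      have hsub : {e : ℝ | γ e = 0} ∩ (Set.Icc (-(1 / (m : ℝ))) (1 / (m : ℝ)))ᶜ
          ⊆ {e : ℝ | γ e = 0} := inter_subset_left
      calc (∫ e in {e : ℝ | γ e = 0} ∩ (Set.Icc (-(1 / (m : ℝ))) (1 / (m : ℝ)))ᶜ,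
              hpen lam (phim m (u e)) ∂ν)
          ≤ ∫ e in {e : ℝ | γ e = 0} ∩ (Set.Icc (-(1 / (m : ℝ))) (1 / (m : ℝ)))ᶜ,
              hpen lam (u e) ∂ν := by
            refine integral_mono_ae ?_ hhu_int.restrict
              (Filter.Eventually.of_forall fun e => hpen_phim_le hlam m (u e))
            refine Integrable.mono hhu_int.restrict
              (((hpen_continuous lam).measurable.comp
                ((phim_measurable m).comp humeas)).aestronglyMeasurable) ?_
            filter_upwards with e
            rw [Real.norm_eq_abs, Real.norm_eq_abs,
              abs_of_nonneg (hpen_nonneg hlam _), abs_of_nonneg (hpen_nonneg hlam _)]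
            exact hpen_phim_le hlam m (u e)
        _ ≤ ∫ e in {e | γ e = 0}, hpen lam (u e) ∂ν :=
            setIntegral_mono_set hhu_int.integrableOn
              (Filter.Eventually.of_forall fun e => hpen_nonneg hlam _)
              (HasSubset.Subset.eventuallyLE hsub)
    have hQ : lam / 2 * ((0 : ℝ) - (z + Cke / lam)) ^ 2 * rhom m z
        ≤ lam / 2 * z ^ 2 + Cke * z + Cke ^ 2 / (2 * lam) := by
      have h1 : lam / 2 * ((0 : ℝ) - (z + Cke / lam)) ^ 2 * rhom m z
          ≤ lam / 2 * ((0 : ℝ) - (z + Cke / lam)) ^ 2 := by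
        have hX : 0 ≤ lam / 2 * ((0 : ℝ) - (z + Cke / lam)) ^ 2 := by positivity
        nlinarith [mul_nonneg hX (sub_nonneg.2 (rhom_le_one m z))]
      have h2 : lam / 2 * ((0 : ℝ) - (z + Cke / lam)) ^ 2
          = lam / 2 * z ^ 2 + Cke * z + Cke ^ 2 / (2 * lam) := by
        field_simp
        ring
      linarith
    have hB : (0 : ℝ) * ∫ e in {e | γ e = 0}, η e ∂ν = 0 := by ring
    linarith
  constructor
  · unfold fm
    have hcomb : (pil + pib) * ∫ e, |η e| ∂ν
        = (pil + pib) * (∫ e in {e | γ e = 0}, |η e| ∂ν)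
          + (pil + pib) * (∫ e in {e | γ e ≠ 0}, |η e| ∂ν) := by
      rw [← hsplitE]; ring
    linarith [hinf1lb, hIlb]
  · unfold fm
    linarith [hinf1ub, hIub, hf10, hsplitH]
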